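/- arXiv:2404.15703 — 4 statements merged into one kernel-verified Lean document; each statement's English description precedes it below -/
import Mathlib

section
/- (Unisolvence of the first enriched family) Let α > -1 with α ≠ -6/7. If p is a bivariate polynomial of degree at most 2 on the reference triangle T with vertices v₁=(1,0), v₂=(0,1), v₃=(0,0) such that ∫₀¹ p(t v_{j+1} + (1-t)v_{j+2}) dt = 0 and ∫₀¹ t^α(1-t)^α p(t v_j + (1-t) m_j) dt = 0 for j = 1,2,3, where m_j = (v_{j+1}+v_{j+2})/2 is the midpoint of the edge opposite v_j (indices mod 3), then p = 0. -/
open MvPolynomial MeasureTheory intervalIntegral Set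

noncomputable section

/-- Vertices of the reference triangle. -/
def vtx : Fin 3 → ℝ × ℝ := ![(1, 0), (0, 1), (0, 0)]

/-- Barycentric coordinates on the reference triangle. -/
def lam : Fin 3 → ℝ × ℝ → ℝ := ![fun q => q.1, fun q => q.2, fun q => 1 - q.1 - q.2]

/-- The AF3 basis functions φᵢ = λᵢ(1 - 3λ_{i+1} - 3λ_{i+2}). -/
def bphi (i : Fin 3) (q : ℝ × ℝ) : ℝ :=
  lam i q * (1 - 3 * lam (i + 1) q - 3 * lam (i + 2) q)

/-- The AF3 basis functions ϕᵢ = 6 λ_{i+1} λ_{i+2}. -/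
def sphi (i : Fin 3) (q : ℝ × ℝ) : ℝ := 6 * lam (i + 1) q * lam (i + 2) q

/-- Evaluation of a bivariate polynomial at a point of ℝ². -/
def evalP (p : MvPolynomial (Fin 2) ℝ) (q : ℝ × ℝ) : ℝ :=
  MvPolynomial.eval ![q.1, q.2] p

/-- Midpoint of the edge opposite vertex `j`. -/
def mid (j : Fin 3) : ℝ × ℝ := (1 / 2 : ℝ) • (vtx (j + 1) + vtx (j + 2))

/-! ## Auxiliary material -/

lemma vtx0 : vtx 0 = (1,0) := rfl
lemma vtx1 : vtx 1 = (0,1) := rfl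
lemma vtx2 : vtx 2 = (0,0) := rfl

lemma mid0 : mid 0 = (0, 1/2) := by
  rw [mid, show ((0:Fin 3)+1) = 1 from rfl, show ((0:Fin 3)+2) = 2 from rfl, vtx1, vtx2]
  norm_num [Prod.ext_iff]

lemma mid1 : mid 1 = (1/2, 0) := by
  rw [mid, show ((1:Fin 3)+1) = 2 from rfl, show ((1:Fin 3)+2) = 0 from rfl, vtx2, vtx0]
  norm_num [Prod.ext_iff]

lemma mid2 : mid 2 = (1/2, 1/2) := by
  rw [mid, show ((2:Fin 3)+1) = 0 from rfl, show ((2:Fin 3)+2) = 1 from rfl, vtx0, vtx1]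
  norm_num [Prod.ext_iff]

def s2 (i j : ℕ) : Fin 2 →₀ ℕ := Finsupp.single 0 i + Finsupp.single 1 j

lemma s2_eq_iff (i j i' j' : ℕ) : s2 i' j' = s2 i j ↔ (i = i' ∧ j = j') := by
  constructor
  · intro h
    constructor
    · simpa [s2] using (DFunLike.congr_fun h 0).symm
    · simpa [s2] using (DFunLike.congr_fun h 1).symm
  · rintro ⟨rfl, rfl⟩; rfl

lemma rep (p : MvPolynomial (Fin 2) ℝ) (hp : p.totalDegree ≤ 2) :
    p = C (coeff (s2 0 0) p) * X 0 ^ 0 * X 1 ^ 0 + C (coeff (s2 1 0) p) * X 0 ^ 1 * X 1 ^ 0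
      + C (coeff (s2 0 1) p) * X 0 ^ 0 * X 1 ^ 1
      + C (coeff (s2 2 0) p) * X 0 ^ 2 * X 1 ^ 0 + C (coeff (s2 1 1) p) * X 0 ^ 1 * X 1 ^ 1
      + C (coeff (s2 0 2) p) * X 0 ^ 0 * X 1 ^ 2 := by
  apply MvPolynomial.ext
  intro m
  have hm : m = s2 (m 0) (m 1) := by
    ext i; fin_cases i <;> simp [s2]
  have hsum : m.sum (fun _ n => n) = m 0 + m 1 := by
    rw [Finsupp.sum_fintype] <;> simp [Fin.sum_univ_two]
  rw [hm]
  set i := m 0 with hi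
  set j := m 1 with hj
  have key : ∀ i' j' : ℕ,
      coeff (s2 i j) ((C (coeff (s2 i' j') p) : MvPolynomial (Fin 2) ℝ) * X 0 ^ i' * X 1 ^ j')
        = if i = i' ∧ j = j' then coeff (s2 i' j') p else 0 := by
    intro i' j'
    rw [mul_assoc, X_pow_eq_monomial, X_pow_eq_monomial, monomial_mul, mul_one,
      C_mul_monomial, mul_one, coeff_monomial, ← s2]
    simp [s2_eq_iff]
  simp only [coeff_add, key]
  by_cases hij : i + j ≤ 2
  · have hi2 : i ≤ 2 := by omega
    have hj2 : j ≤ 2 := by omega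
    interval_cases i <;> interval_cases j <;> first | (exfalso; omega) | simp
  · have hz : coeff (s2 i j) p = 0 := by
      by_contra h
      have h2 := le_totalDegree (p := p) (s := s2 i j) (mem_support_iff.2 h)
      rw [← hm, hsum] at h2
      omega
    rw [hz]
    have c1 : ¬(i = 0 ∧ j = 0) := by omega
    have c2 : ¬(i = 1 ∧ j = 0) := by omega
    have c3 : ¬(i = 0 ∧ j = 1) := by omega
    have c4 : ¬(i = 2 ∧ j = 0) := by omega
    have c5 : ¬(i = 1 ∧ j = 1) := by omega
    have c6 : ¬(i = 0 ∧ j = 2) := by omega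
    simp [c1, c2, c3, c4, c5, c6]

lemma integral_quad (A B C : ℝ) : (∫ t in (0:ℝ)..1, (A + B*t + C*t^2)) = A + B/2 + C/3 := by
  have hB : IntervalIntegrable (fun t : ℝ => B * t) volume 0 1 :=
    (by continuity : Continuous fun t : ℝ => B * t).intervalIntegrable _ _
  have hC : IntervalIntegrable (fun t : ℝ => C * t ^ 2) volume 0 1 :=
    (by continuity : Continuous fun t : ℝ => C * t ^ 2).intervalIntegrable _ _
  rw [integral_add (intervalIntegrable_const.add hB) hC, integral_add intervalIntegrable_const hB,
    intervalIntegral.integral_const, intervalIntegral.integral_const_mul, intervalIntegral.integral_const_mul, integral_id,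
    integral_pow]
  norm_num
  ring

lemma integrable_w {a b : ℝ} (ha : -1 < a) (hb : -1 < b) :
    IntervalIntegrable (fun t : ℝ => t ^ a * (1 - t) ^ b) volume 0 1 := by
  have h := Complex.betaIntegral_convergent (u := (a:ℂ) + 1) (v := (b:ℂ) + 1)
    (by simp; linarith) (by simp; linarith)
  rw [intervalIntegrable_iff_integrableOn_Ioc_of_le zero_le_one] at h ⊢
  have h2 : IntegrableOn (fun x : ℝ => ((x:ℂ) ^ ((a:ℂ) + 1 - 1) * (1 - (x:ℂ)) ^ ((b:ℂ) + 1 - 1)).re)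
      (Ioc (0:ℝ) 1) volume := h.re
  apply h2.congr_fun _ measurableSet_Ioc
  intro x hx
  have hx0 : (0:ℝ) ≤ x := hx.1.le
  have hx1 : (0:ℝ) ≤ 1 - x := by linarith [hx.2]
  have e1 : ((x:ℂ)) ^ ((a:ℂ) + 1 - 1) = ((x ^ a : ℝ) : ℂ) := by
    rw [add_sub_cancel_right, ← Complex.ofReal_cpow hx0]
  have e2 : ((1:ℂ) - (x:ℂ)) ^ ((b:ℂ) + 1 - 1) = (((1 - x) ^ b : ℝ) : ℂ) := by
    rw [add_sub_cancel_right, show (1:ℂ) - (x:ℂ) = ((1 - x : ℝ) : ℂ) by push_cast; ring,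
      ← Complex.ofReal_cpow hx1]
  dsimp only
  rw [e1, e2, ← Complex.ofReal_mul, Complex.ofReal_re]

variable {α : ℝ}

lemma integrable_wk (hα : -1 < α) (k : ℕ) :
    IntervalIntegrable (fun t : ℝ => t ^ α * (1 - t) ^ α * t ^ k) volume 0 1 := by
  have h := integrable_w (a := α + k) (b := α) (by linarith [Nat.cast_nonneg (α := ℝ) k]) hα
  rw [intervalIntegrable_iff_integrableOn_Ioc_of_le zero_le_one] at h ⊢
  apply h.congr_fun _ measurableSet_Ioc
  intro x hx
  dsimp only
  rw [Real.rpow_add hx.1, Real.rpow_natCast]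
  ring

lemma I1_eq (hα : -1 < α) :
    (∫ t in (0:ℝ)..1, t ^ α * (1 - t) ^ α * t)
      = (∫ t in (0:ℝ)..1, t ^ α * (1 - t) ^ α) - ∫ t in (0:ℝ)..1, t ^ α * (1 - t) ^ α * t := by
  have hs := intervalIntegral.integral_comp_sub_left (a := (0:ℝ)) (b := 1)
    (fun t => t ^ α * (1 - t) ^ α * t) 1
  norm_num at hs
  have e : ∀ x : ℝ, (1-x)^α * x^α * (1-x) = x^α*(1-x)^α - x^α*(1-x)^α*x := fun x => by ring
  have key : (∫ x in (0:ℝ)..1, (1-x)^α * x^α * (1-x))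
      = (∫ t in (0:ℝ)..1, t ^ α * (1 - t) ^ α) - ∫ t in (0:ℝ)..1, t ^ α * (1 - t) ^ α * t := by
    simp only [e]
    rw [integral_sub (integrable_w hα hα) (by simpa using integrable_wk hα 1)]
  linarith [hs, key]

lemma I0_pos (hα : -1 < α) : 0 < ∫ t in (0:ℝ)..1, t ^ α * (1 - t) ^ α := by
  apply intervalIntegral_pos_of_pos_on (integrable_w hα hα)
  · intro x hx
    exact mul_pos (Real.rpow_pos_of_pos hx.1 _) (Real.rpow_pos_of_pos (by linarith [hx.2]) _)
  · norm_num

lemma recurr (hα : -1 < α) :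
    (α + 2) * (∫ t in (0:ℝ)..1, t ^ α * (1 - t) ^ α * t)
      = (2*α + 3) * ∫ t in (0:ℝ)..1, t ^ α * (1 - t) ^ α * t^2 := by
  have hne2 : α + 2 ≠ 0 := by linarith
  have hne1 : α + 1 ≠ 0 := by linarith
  set g : ℝ → ℝ := fun x => (α+2) * x^(α+1) * (1-x)^(α+1) - (α+1) * x^(α+2) * (1-x)^α with hg
  have hEq : ∀ x ∈ Ioc (0:ℝ) 1,
      (α+2) * (x^α*(1-x)^α*x^(1:ℕ)) - (α+2) * (x^α*(1-x)^α*x^(2:ℕ))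
        - (α+1) * (x^α*(1-x)^α*x^(2:ℕ)) = g x := by
    intro x hx
    have hx0 : (0:ℝ) < x := hx.1
    have e1 : x^(α+1) = x^α * x := by rw [Real.rpow_add hx0, Real.rpow_one]
    have e2 : x^(α+2) = x^α * x^(2:ℕ) := by
      rw [Real.rpow_add hx0, show ((2:ℝ)) = ((2:ℕ):ℝ) by norm_num, Real.rpow_natCast]
    have e3 : (1-x)^(α+1) = (1-x)^α * (1-x) := by
      rcases eq_or_lt_of_le hx.2 with h|h
      · subst h
        norm_num [Real.zero_rpow hne1]
      · rw [Real.rpow_add (by linarith), Real.rpow_one]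
    simp only [hg]
    rw [e1, e2, e3]
    ring
  have hgi : IntervalIntegrable g volume 0 1 := by
    have h1 := (integrable_wk hα 1).const_mul (α+2)
    have h2 := (integrable_wk hα 2).const_mul (α+2)
    have h3 := (integrable_wk hα 2).const_mul (α+1)
    rw [intervalIntegrable_iff_integrableOn_Ioc_of_le zero_le_one] at h1 h2 h3 ⊢
    have h4 : IntegrableOn (fun x : ℝ => (α+2) * (x^α*(1-x)^α*x^(1:ℕ))
        - (α+2) * (x^α*(1-x)^α*x^(2:ℕ)) - (α+1) * (x^α*(1-x)^α*x^(2:ℕ))) (Ioc (0:ℝ) 1) volume :=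
      (h1.sub h2).sub h3
    exact h4.congr_fun hEq measurableSet_Ioc
  have hftc : (∫ x in (0:ℝ)..1, g x) = 0 := by
    have hd := intervalIntegral.integral_eq_sub_of_hasDerivAt_of_le
      (f := fun x : ℝ => x^(α+2) * (1-x)^(α+1)) (f' := g) zero_le_one ?_ ?_ hgi
    · rw [hd]
      show (1:ℝ)^(α+2) * (1-1)^(α+1) - (0:ℝ)^(α+2) * (1-0)^(α+1) = 0
      norm_num [Real.zero_rpow hne2, Real.zero_rpow hne1, Real.one_rpow]
    · apply ContinuousOn.mul
      · intro x hx
        exact (Real.continuousAt_rpow_const _ _ (Or.inr (by linarith))).continuousWithinAt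
      · intro x hx
        have hc : ContinuousAt (fun y : ℝ => y ^ (α+1)) (1 - x) :=
          Real.continuousAt_rpow_const _ _ (Or.inr (by linarith))
        exact (hc.comp (by fun_prop)).continuousWithinAt
    · intro x hx
      have hx0 : x ≠ 0 := ne_of_gt hx.1
      have hx1 : (1:ℝ) - x ≠ 0 := by have := hx.2; intro h; linarith
      have d1 : HasDerivAt (fun y : ℝ => y ^ (α+2)) ((α+2) * x^(α+2-1)) x :=
        Real.hasDerivAt_rpow_const (Or.inl hx0)
      have d2' : HasDerivAt (fun y : ℝ => y ^ (α+1)) ((α+1) * (1-x)^(α+1-1)) (1-x) :=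
        Real.hasDerivAt_rpow_const (Or.inl hx1)
      have d3 : HasDerivAt (fun y : ℝ => 1 - y) (-1) x := by
        simpa using (hasDerivAt_id x).const_sub 1
      have d2 : HasDerivAt (fun y : ℝ => (1-y)^(α+1)) ((α+1) * (1-x)^(α+1-1) * -1) x :=
        d2'.comp x d3
      have dm := d1.mul d2
      refine dm.congr_deriv ?_
      show _ = (α+2) * x^(α+1) * (1-x)^(α+1) - (α+1) * x^(α+2) * (1-x)^α
      rw [show α + 2 - 1 = α + 1 by ring, show α + 1 - 1 = α by ring]
      ring
  have hsplit : (∫ x in (0:ℝ)..1, g x)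
      = (α+2) * (∫ t in (0:ℝ)..1, t^α*(1-t)^α*t^(1:ℕ))
        - (α+2) * (∫ t in (0:ℝ)..1, t^α*(1-t)^α*t^(2:ℕ))
        - (α+1) * (∫ t in (0:ℝ)..1, t^α*(1-t)^α*t^(2:ℕ)) := by
    rw [← intervalIntegral.integral_const_mul, ← intervalIntegral.integral_const_mul, ← intervalIntegral.integral_const_mul,
      ← integral_sub (((integrable_wk hα 1).const_mul (α+2))) ((integrable_wk hα 2).const_mul (α+2)),
      ← integral_sub (((integrable_wk hα 1).const_mul (α+2)).sub ((integrable_wk hα 2).const_mul (α+2)))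
        ((integrable_wk hα 2).const_mul (α+1))]
    apply intervalIntegral.integral_congr_ae
    filter_upwards with x hx
    rw [uIoc_of_le zero_le_one] at hx
    exact (hEq x hx).symm
  have hsimp1 : (∫ t in (0:ℝ)..1, t^α*(1-t)^α*t^(1:ℕ)) = ∫ t in (0:ℝ)..1, t^α*(1-t)^α*t := by
    norm_num
  rw [hsplit, hsimp1] at hftc
  linarith

lemma wq (hα : -1 < α) (A B C : ℝ) :
    (∫ t in (0:ℝ)..1, t^α*(1-t)^α*(A + B*t + C*t^2))
      = A * (∫ t in (0:ℝ)..1, t^α*(1-t)^α) + B * (∫ t in (0:ℝ)..1, t^α*(1-t)^α*t)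
        + C * (∫ t in (0:ℝ)..1, t^α*(1-t)^α*t^2) := by
  have e : ∀ t : ℝ, t^α*(1-t)^α*(A + B*t + C*t^2)
      = A*(t^α*(1-t)^α) + B*(t^α*(1-t)^α*t) + C*(t^α*(1-t)^α*t^2) := fun t => by ring
  simp only [e]
  have i0 := integrable_w hα hα
  have i1 : IntervalIntegrable (fun t : ℝ => t^α*(1-t)^α*t) volume 0 1 := by
    simpa using integrable_wk hα 1
  have i2 : IntervalIntegrable (fun t : ℝ => t^α*(1-t)^α*t^2) volume 0 1 := integrable_wk hα 2
  rw [integral_add ((i0.const_mul A).add (i1.const_mul B)) (i2.const_mul C),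
    integral_add (i0.const_mul A) (i1.const_mul B),
    intervalIntegral.integral_const_mul, intervalIntegral.integral_const_mul, intervalIntegral.integral_const_mul]

set_option maxHeartbeats 1000000 in
theorem first_family_unisolvent (α : ℝ) (hα : -1 < α) (hα7 : α ≠ -6 / 7)
    (p : MvPolynomial (Fin 2) ℝ) (hp : p.totalDegree ≤ 2)
    (hCR : ∀ j : Fin 3,
      (∫ t in (0:ℝ)..1, evalP p (t • vtx (j + 1) + (1 - t) • vtx (j + 2))) = 0)
    (hF : ∀ j : Fin 3,
      (∫ t in (0:ℝ)..1, t ^ α * (1 - t) ^ α * evalP p (t • vtx j + (1 - t) • mid j)) = 0) :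
    p = 0 := by
  obtain ⟨a, b, c, d, e, f, hq⟩ :
      ∃ a b c d e f : ℝ, p = C a * X 0 ^ 0 * X 1 ^ 0 + C b * X 0 ^ 1 * X 1 ^ 0
        + C c * X 0 ^ 0 * X 1 ^ 1 + C d * X 0 ^ 2 * X 1 ^ 0 + C e * X 0 ^ 1 * X 1 ^ 1
        + C f * X 0 ^ 0 * X 1 ^ 2 :=
    ⟨_, _, _, _, _, _, rep p hp⟩
  have hrep : ∀ q : ℝ × ℝ,
      evalP p q = a + b * q.1 + c * q.2 + d * q.1^2 + e * (q.1 * q.2) + f * q.2^2 := by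
    intro q
    rw [hq, evalP]
    simp
    ring
  set I0 := ∫ t in (0:ℝ)..1, t^α*(1-t)^α with hI0def
  set I1 := ∫ t in (0:ℝ)..1, t^α*(1-t)^α*t with hI1def
  set I2 := ∫ t in (0:ℝ)..1, t^α*(1-t)^α*t^2 with hI2def
  have h21 : 2 * I1 = I0 := by have := I1_eq hα; rw [← hI1def, ← hI0def] at this; linarith
  have hrec : (α + 2) * I1 = (2*α + 3) * I2 := recurr hα
  have hI0pos : 0 < I0 := I0_pos hα
  have key : ∀ A B C : ℝ, A * I0 + B * I1 + C * I2 = 0 →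
      2*(2*α+3)*A + (2*α+3)*B + (α+2)*C = 0 := by
    intro A B C hyp
    have hz : (2*(2*α+3)*A + (2*α+3)*B + (α+2)*C) * I0 = 0 := by
      linear_combination (2*(2*α+3)) * hyp - ((2*α+3)*B + (α+2)*C) * h21 + (2*C) * hrec
    exact (mul_eq_zero.mp hz).resolve_right (ne_of_gt hI0pos)
  -- Crouzeix–Raviart equations
  have h1 : a + c/2 + f/3 = 0 := by
    have h := hCR 0
    rw [show (∫ t in (0:ℝ)..1, evalP p (t • vtx (0 + 1) + (1 - t) • vtx (0 + 2)))
        = ∫ t in (0:ℝ)..1, (a + c*t + f*t^2) from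
      intervalIntegral.integral_congr (fun t _ => by
        rw [show ((0:Fin 3)+1) = 1 from rfl, show ((0:Fin 3)+2) = 2 from rfl,
          hrep, vtx1, vtx2]
        norm_num
        try ring),
      integral_quad] at h
    linarith
  have h2 : a + b/2 + d/3 = 0 := by
    have h := hCR 1
    rw [show (∫ t in (0:ℝ)..1, evalP p (t • vtx (1 + 1) + (1 - t) • vtx (1 + 2)))
        = ∫ t in (0:ℝ)..1, ((a + b + d) + (-b - 2*d)*t + d*t^2) from
      intervalIntegral.integral_congr (fun t _ => by
        rw [show ((1:Fin 3)+1) = 2 from rfl, show ((1:Fin 3)+2) = 0 from rfl,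
          hrep, vtx2, vtx0]
        norm_num
        try ring),
      integral_quad] at h
    linarith
  have h3 : a + b/2 + c/2 + d/3 + e/6 + f/3 = 0 := by
    have h := hCR 2
    rw [show (∫ t in (0:ℝ)..1, evalP p (t • vtx (2 + 1) + (1 - t) • vtx (2 + 2)))
        = ∫ t in (0:ℝ)..1, ((a + c + f) + (b - c + e - 2*f)*t + (d - e + f)*t^2) from
      intervalIntegral.integral_congr (fun t _ => by
        rw [show ((2:Fin 3)+1) = 0 from rfl, show ((2:Fin 3)+2) = 1 from rfl,
          hrep, vtx0, vtx1]
        norm_num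
        try ring),
      integral_quad] at h
    linarith
  -- weighted median equations
  have h4 : 2*(2*α+3)*(a + c/2 + f/4) + (2*α+3)*(b - c/2 + e/2 - f/2) + (α+2)*(d - e/2 + f/4) = 0 := by
    apply key
    have h := hF 0
    rw [show (∫ t in (0:ℝ)..1, t ^ α * (1 - t) ^ α * evalP p (t • vtx 0 + (1 - t) • mid 0))
        = ∫ t in (0:ℝ)..1, t^α*(1-t)^α*((a + c/2 + f/4) + (b - c/2 + e/2 - f/2)*t + (d - e/2 + f/4)*t^2) from
      intervalIntegral.integral_congr (fun t _ => by
        rw [hrep, vtx0, mid0]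
        congr 1
        norm_num
        try ring),
      wq hα] at h
    exact h
  have h5 : 2*(2*α+3)*(a + b/2 + d/4) + (2*α+3)*(-b/2 + c - d/2 + e/2) + (α+2)*(d/4 - e/2 + f) = 0 := by
    apply key
    have h := hF 1
    rw [show (∫ t in (0:ℝ)..1, t ^ α * (1 - t) ^ α * evalP p (t • vtx 1 + (1 - t) • mid 1))
        = ∫ t in (0:ℝ)..1, t^α*(1-t)^α*((a + b/2 + d/4) + (-b/2 + c - d/2 + e/2)*t + (d/4 - e/2 + f)*t^2) from
      intervalIntegral.integral_congr (fun t _ => by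
        rw [hrep, vtx1, mid1]
        congr 1
        norm_num
        try ring),
      wq hα] at h
    exact h
  have h6 : 2*(2*α+3)*(a + b/2 + c/2 + d/4 + e/4 + f/4) + (2*α+3)*(-b/2 - c/2 - d/2 - e/2 - f/2)
      + (α+2)*(d/4 + e/4 + f/4) = 0 := by
    apply key
    have h := hF 2
    rw [show (∫ t in (0:ℝ)..1, t ^ α * (1 - t) ^ α * evalP p (t • vtx 2 + (1 - t) • mid 2))
        = ∫ t in (0:ℝ)..1, t^α*(1-t)^α*((a + b/2 + c/2 + d/4 + e/4 + f/4)
            + (-b/2 - c/2 - d/2 - e/2 - f/2)*t + (d/4 + e/4 + f/4)*t^2) from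
      intervalIntegral.integral_congr (fun t _ => by
        rw [hrep, vtx2, mid2]
        congr 1
        norm_num
        try ring),
      wq hα] at h
    exact h
  -- linear algebra: the determinant is 2(7α+6)(α+6)²
  have hD : (14*α^3 + 180*α^2 + 648*α + 432) ≠ 0 := by
    intro h
    have h76 : 7*α + 6 ≠ 0 := fun hh => hα7 (by linarith)
    have h66 : α + 6 ≠ 0 := by intro hh; linarith
    have hfac : 2*(7*α+6)*(α+6)^2 = 0 := by linear_combination h
    rcases mul_eq_zero.mp hfac with h' | h'
    · rcases mul_eq_zero.mp h' with h'' | h''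
      · norm_num at h''
      · exact h76 h''
    · exact h66 (pow_eq_zero_iff (by norm_num) |>.mp h')
  have hDa : (14*α^3 + 180*α^2 + 648*α + 432) * a = 0 := by
    linear_combination (6*((72) + (60)*α + (-10)*α^2 + (-3)*α^3)) * h1 + (6*((72) + (60)*α + (-10)*α^2 + (-3)*α^3)) * h2 + (6*((72) + (132)*α + (86)*α^2 + (11)*α^3)) * h3 + (4*((-36) + (-36)*α + (-5)*α^2)) * h4 + (4*((-36) + (-36)*α + (-5)*α^2)) * h5 + (4*((36) + (60)*α + (9)*α^2)) * h6
  have hDb : (14*α^3 + 180*α^2 + 648*α + 432) * b = 0 := by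
    linear_combination (6*((-432) + (-504)*α + (-132)*α^2 + (-10)*α^3)) * h1 + (6*((288)*α + (240)*α^2 + (32)*α^3)) * h2 + (6*((-432) + (-648)*α + (-324)*α^2 + (-38)*α^3)) * h3 + (4*((72) + (24)*α + (2)*α^2)) * h4 + (4*((216) + (216)*α + (30)*α^2)) * h5 + (4*((-72) + (-168)*α + (-26)*α^2)) * h6
  have hDc : (14*α^3 + 180*α^2 + 648*α + 432) * c = 0 := by
    linear_combination (6*((288)*α + (240)*α^2 + (32)*α^3)) * h1 + (6*((-432) + (-504)*α + (-132)*α^2 + (-10)*α^3)) * h2 + (6*((-432) + (-648)*α + (-324)*α^2 + (-38)*α^3)) * h3 + (4*((216) + (216)*α + (30)*α^2)) * h4 + (4*((72) + (24)*α + (2)*α^2)) * h5 + (4*((-72) + (-168)*α + (-26)*α^2)) * h6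
  have hDd : (14*α^3 + 180*α^2 + 648*α + 432) * d = 0 := by
    linear_combination (6*((432) + (576)*α + (228)*α^2 + (24)*α^3)) * h1 + (6*((-288)*α + (-240)*α^2 + (-32)*α^3)) * h2 + (6*((432) + (576)*α + (228)*α^2 + (24)*α^3)) * h3 + (4*((72)*α + (12)*α^2)) * h4 + (4*((-216) + (-216)*α + (-30)*α^2)) * h5 + (4*((72)*α + (12)*α^2)) * h6
  have hDe : (14*α^3 + 180*α^2 + 648*α + 432) * e = 0 := by
    linear_combination (6*((-288)*α + (-240)*α^2 + (-32)*α^3)) * h1 + (6*((-288)*α + (-240)*α^2 + (-32)*α^3)) * h2 + (6*((864) + (1440)*α + (696)*α^2 + (80)*α^3)) * h3 + (4*((-216) + (-216)*α + (-30)*α^2)) * h4 + (4*((-216) + (-216)*α + (-30)*α^2)) * h5 + (4*((216) + (360)*α + (54)*α^2)) * h6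
  have hDf : (14*α^3 + 180*α^2 + 648*α + 432) * f = 0 := by
    linear_combination (6*((-288)*α + (-240)*α^2 + (-32)*α^3)) * h1 + (6*((432) + (576)*α + (228)*α^2 + (24)*α^3)) * h2 + (6*((432) + (576)*α + (228)*α^2 + (24)*α^3)) * h3 + (4*((-216) + (-216)*α + (-30)*α^2)) * h4 + (4*((72)*α + (12)*α^2)) * h5 + (4*((72)*α + (12)*α^2)) * h6
  have ea : a = 0 := (mul_eq_zero.mp hDa).resolve_left hD
  have eb : b = 0 := (mul_eq_zero.mp hDb).resolve_left hD
  have ec : c = 0 := (mul_eq_zero.mp hDc).resolve_left hD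
  have ed : d = 0 := (mul_eq_zero.mp hDd).resolve_left hD
  have ee : e = 0 := (mul_eq_zero.mp hDe).resolve_left hD
  have ef : f = 0 := (mul_eq_zero.mp hDf).resolve_left hD
  rw [hq, ea, eb, ec, ed, ee, ef]
  simp

end
end

section
/- (Unisolvence of the second enriched family) Let β > -1. If p is a bivariate polynomial of degree at most 2 on the reference triangle T with vertices v₁=(1,0), v₂=(0,1), v₃=(0,0) such that ∫₀¹ p(t v_{j+1} + (1-t)v_{j+2}) dt = 0 and ∫₀¹ t^β(1-t)^β p(t v_j + (1-t) m*) dt = 0 for j = 1,2,3, where m* = (v₁+v₂+v₃)/3 is the barycenter of T (vertex indices mod 3), then p = 0. -/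
open MvPolynomial
open MeasureTheory

section AuxLemmas

lemma fs_sum_eq (m : Fin 2 →₀ ℕ) (x0 x1 : ℕ) :
    (Finsupp.single 0 x0 + Finsupp.single 1 x1 = m) ↔ (m 0 = x0 ∧ m 1 = x1) := by
  constructor
  · intro h; rw [← h]; simp [Finsupp.single_apply]
  · rintro ⟨h0, h1⟩; ext i; fin_cases i <;> simp [Finsupp.single_apply, h0, h1]

lemma fs_single0_eq (m : Fin 2 →₀ ℕ) (x0 : ℕ) :
    (Finsupp.single (0 : Fin 2) x0 = m) ↔ (m 0 = x0 ∧ m 1 = 0) := by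
  rw [show (Finsupp.single (0 : Fin 2) x0) = Finsupp.single 0 x0 + Finsupp.single 1 0 by simp]
  exact fs_sum_eq m x0 0

lemma fs_single1_eq (m : Fin 2 →₀ ℕ) (x1 : ℕ) :
    (Finsupp.single (1 : Fin 2) x1 = m) ↔ (m 0 = 0 ∧ m 1 = x1) := by
  rw [show (Finsupp.single (1 : Fin 2) x1) = Finsupp.single 0 0 + Finsupp.single 1 x1 by simp]
  exact fs_sum_eq m 0 x1

lemma fs_zero_eq (m : Fin 2 →₀ ℕ) :
    ((0 : Fin 2 →₀ ℕ) = m) ↔ (m 0 = 0 ∧ m 1 = 0) := by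
  rw [show (0 : Fin 2 →₀ ℕ) = Finsupp.single 0 0 + Finsupp.single 1 0 by simp]
  exact fs_sum_eq m 0 0

lemma decomp (p : MvPolynomial (Fin 2) ℝ) (hp : p.totalDegree ≤ 2) :
    p = monomial 0 (coeff 0 p)
      + monomial (Finsupp.single 0 1) (coeff (Finsupp.single 0 1) p)
      + monomial (Finsupp.single 1 1) (coeff (Finsupp.single 1 1) p)
      + monomial (Finsupp.single 0 2) (coeff (Finsupp.single 0 2) p)
      + monomial (Finsupp.single 0 1 + Finsupp.single 1 1)
          (coeff (Finsupp.single 0 1 + Finsupp.single 1 1) p)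
      + monomial (Finsupp.single 1 2) (coeff (Finsupp.single 1 2) p) := by
  ext m
  simp only [coeff_add, coeff_monomial, fs_sum_eq, fs_single0_eq, fs_single1_eq, fs_zero_eq]
  by_cases hdeg : m 0 + m 1 ≤ 2
  · have h0 : m 0 ≤ 2 := by omega
    have h1 : m 1 ≤ 2 := by omega
    interval_cases h0' : m 0 <;> interval_cases h1' : m 1 <;>
      first
        | omega
        | (norm_num
           congr 1
           ext i
           fin_cases i <;> simp [Finsupp.single_apply, h0', h1'])
  · have hz : coeff m p = 0 := by
      apply coeff_eq_zero_of_totalDegree_lt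
      have hs : (∑ i ∈ m.support, m i) = m 0 + m 1 := by
        rw [Finset.sum_subset (Finset.subset_univ m.support)
          (fun x _ hx => Finsupp.notMem_support_iff.mp hx)]
        simp [Fin.sum_univ_two]
      omega
    rw [hz]
    split_ifs <;> first | (exfalso; omega) | norm_num

lemma wIntegrable {β : ℝ} (hβ : -1 < β) :
    IntervalIntegrable (fun t : ℝ => t ^ β * (1 - t) ^ β) volume 0 1 := by
  have h1 : IntervalIntegrable (fun t : ℝ => t ^ β * (1 - t) ^ β) volume 0 (1 / 2) := by
    apply (intervalIntegral.intervalIntegrable_rpow' hβ).mul_continuousOn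
    apply ContinuousOn.rpow_const (continuous_const.sub continuous_id).continuousOn
    intro x hx
    rw [Set.uIcc_of_le (by norm_num : (0:ℝ) ≤ 1/2)] at hx
    have := hx.2
    left
    simp only [Pi.sub_apply, id]
    intro h
    rw [sub_eq_zero] at h
    norm_num [← h] at this
  have h2 : IntervalIntegrable (fun t : ℝ => t ^ β * (1 - t) ^ β) volume (1 / 2) 1 := by
    have h3 := h1.comp_sub_left 1
    norm_num at h3
    have h5 := h3.symm
    simpa [mul_comm] using h5
  exact h1.trans h2

lemma JwIntegrable {β : ℝ} (hβ : -1 < β) (k : ℕ) :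
    IntervalIntegrable (fun t : ℝ => t ^ β * (1 - t) ^ β * t ^ k) volume 0 1 :=
  (wIntegrable hβ).mul_continuousOn (continuous_pow k).continuousOn

lemma integral_quadratic (A B C : ℝ) :
    (∫ t in (0:ℝ)..1, (A + B * t + C * t ^ 2)) = A + B / 2 + C / 3 := by
  have h1 : IntervalIntegrable (fun t : ℝ => A + B * t) volume 0 1 := by
    apply Continuous.intervalIntegrable; continuity
  have h2 : IntervalIntegrable (fun t : ℝ => C * t ^ 2) volume 0 1 := by
    apply Continuous.intervalIntegrable; continuity
  have h3 : IntervalIntegrable (fun _ : ℝ => A) volume 0 1 := by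
    apply Continuous.intervalIntegrable; continuity
  have h4 : IntervalIntegrable (fun t : ℝ => B * t) volume 0 1 := by
    apply Continuous.intervalIntegrable; continuity
  rw [intervalIntegral.integral_add h1 h2, intervalIntegral.integral_add h3 h4,
    intervalIntegral.integral_const, intervalIntegral.integral_const_mul,
    intervalIntegral.integral_const_mul, integral_id, integral_pow]
  norm_num
  ring

noncomputable def Jw (β : ℝ) (k : ℕ) : ℝ := ∫ t in (0:ℝ)..1, t ^ β * (1 - t) ^ β * t ^ k

lemma integral_weighted {β : ℝ} (hβ : -1 < β) (A B C : ℝ) :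
    (∫ t in (0:ℝ)..1, t ^ β * (1 - t) ^ β * (A + B * t + C * t ^ 2))
      = A * Jw β 0 + B * Jw β 1 + C * Jw β 2 := by
  have i0 := JwIntegrable hβ 0
  have i1 := JwIntegrable hβ 1
  have i2 := JwIntegrable hβ 2
  have key : (∫ t in (0:ℝ)..1, t ^ β * (1 - t) ^ β * (A + B * t + C * t ^ 2))
      = ∫ t in (0:ℝ)..1,
        (A * (t ^ β * (1 - t) ^ β * t ^ (0:ℕ)) + B * (t ^ β * (1 - t) ^ β * t ^ (1:ℕ))
          + C * (t ^ β * (1 - t) ^ β * t ^ (2:ℕ))) := by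
    apply intervalIntegral.integral_congr
    intro t _
    simp only [pow_zero, pow_one]
    ring
  rw [key, intervalIntegral.integral_add ((i0.const_mul A).add (i1.const_mul B))
      (i2.const_mul C),
    intervalIntegral.integral_add (i0.const_mul A) (i1.const_mul B),
    intervalIntegral.integral_const_mul, intervalIntegral.integral_const_mul,
    intervalIntegral.integral_const_mul]
  rfl

lemma Jw_half {β : ℝ} (hβ : -1 < β) : Jw β 1 = Jw β 0 / 2 := by
  have hrefl : (∫ t in (0:ℝ)..1, t ^ β * (1 - t) ^ β * (1 - t)) = Jw β 1 := by
    have h := intervalIntegral.integral_comp_sub_left (a := 0) (b := 1)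
      (fun t : ℝ => t ^ β * (1 - t) ^ β * t ^ (1:ℕ)) 1
    norm_num at h
    rw [Jw]
    simp only [pow_one]
    rw [← h]
    apply intervalIntegral.integral_congr
    intro t _
    simp only [sub_sub_cancel]
    ring
  have hsum : Jw β 0 = Jw β 1 + Jw β 1 := by
    have i1 := JwIntegrable hβ 1
    have iw : IntervalIntegrable (fun t : ℝ => t ^ β * (1 - t) ^ β * (1 - t)) volume 0 1 :=
      (wIntegrable hβ).mul_continuousOn ((continuous_const.sub continuous_id).continuousOn)
    have : Jw β 0 = ∫ t in (0:ℝ)..1,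
        (t ^ β * (1 - t) ^ β * t ^ (1:ℕ) + t ^ β * (1 - t) ^ β * (1 - t)) := by
      rw [Jw]
      apply intervalIntegral.integral_congr
      intro t _
      simp only [pow_zero, pow_one]
      ring
    rw [this, intervalIntegral.integral_add i1 iw, hrefl]
    rfl
  linarith

lemma Jw_pos {β : ℝ} (hβ : -1 < β) (k : ℕ) : 0 < Jw β k := by
  apply intervalIntegral.intervalIntegral_pos_of_pos_on (JwIntegrable hβ k)
  · intro x hx
    have h1 : (0:ℝ) < x := hx.1
    have h2 : x < 1 := hx.2
    have := Real.rpow_pos_of_pos h1 β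
    have := Real.rpow_pos_of_pos (by linarith : (0:ℝ) < 1 - x) β
    positivity
  · norm_num

lemma Jw_gap {β : ℝ} (hβ : -1 < β) : Jw β 2 < Jw β 1 := by
  have i1 := JwIntegrable hβ 1
  have i2 := JwIntegrable hβ 2
  have h : 0 < ∫ t in (0:ℝ)..1,
      (t ^ β * (1 - t) ^ β * t ^ (1:ℕ) - t ^ β * (1 - t) ^ β * t ^ (2:ℕ)) := by
    apply intervalIntegral.intervalIntegral_pos_of_pos_on (i1.sub i2)
    · intro x hx
      have h1 : (0:ℝ) < x := hx.1
      have h2 : x < 1 := hx.2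
      have hw : 0 < x ^ β * (1 - x) ^ β := by
        have := Real.rpow_pos_of_pos h1 β
        have := Real.rpow_pos_of_pos (by linarith : (0:ℝ) < 1 - x) β
        positivity
      have : x ^ (2:ℕ) < x ^ (1:ℕ) := by
        simp only [pow_one, pow_two]
        nlinarith
      nlinarith
    · norm_num
  rw [intervalIntegral.integral_sub i1 i2] at h
  have h2 : Jw β 1 - Jw β 2 > 0 := h
  linarith

end AuxLemmas

noncomputable section

/-- Barycenter of the reference triangle. -/
def bary : ℝ × ℝ := (1 / 3 : ℝ) • (vtx 0 + vtx 1 + vtx 2)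

theorem second_family_unisolvent (β : ℝ) (hβ : -1 < β)
    (p : MvPolynomial (Fin 2) ℝ) (hp : p.totalDegree ≤ 2)
    (hCR : ∀ j : Fin 3,
      (∫ t in (0:ℝ)..1, evalP p (t • vtx (j + 1) + (1 - t) • vtx (j + 2))) = 0)
    (hG : ∀ j : Fin 3,
      (∫ t in (0:ℝ)..1, t ^ β * (1 - t) ^ β * evalP p (t • vtx j + (1 - t) • bary)) = 0) :
    p = 0 := by
  obtain ⟨a, b, c, d, e, f, hdecomp⟩ :
      ∃ a b c d e f : ℝ, p = monomial 0 a
        + monomial (Finsupp.single 0 1) b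
        + monomial (Finsupp.single 1 1) c
        + monomial (Finsupp.single 0 2) d
        + monomial (Finsupp.single 0 1 + Finsupp.single 1 1) e
        + monomial (Finsupp.single 1 2) f :=
    ⟨_, _, _, _, _, _, decomp p hp⟩
  have hev : ∀ q : ℝ × ℝ, evalP p q
      = a + b * q.1 + c * q.2 + d * q.1 ^ 2 + e * (q.1 * q.2) + f * q.2 ^ 2 := by
    intro q
    rw [hdecomp]
    simp [evalP, eval_monomial, Finsupp.prod_single_index, Finsupp.prod_add_index]
  have hbary : bary = (1/3, 1/3) := by
    simp [bary, vtx, Prod.ext_iff]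
  have hpt0 : ∀ t : ℝ, t • vtx ((0:Fin 3) + 1) + (1 - t) • vtx ((0:Fin 3) + 2)
      = ((0:ℝ), t) := by
    intro t
    simp only [show ((0:Fin 3)+1) = 1 from rfl, show ((0:Fin 3)+2) = 2 from rfl]
    norm_num [vtx, Prod.ext_iff, Matrix.cons_val_two, Matrix.vecHead, Matrix.vecTail]
  have hpt1 : ∀ t : ℝ, t • vtx ((1:Fin 3) + 1) + (1 - t) • vtx ((1:Fin 3) + 2)
      = (1 - t, (0:ℝ)) := by
    intro t
    simp only [show ((1:Fin 3)+1) = 2 from rfl, show ((1:Fin 3)+2) = 0 from rfl]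
    norm_num [vtx, Prod.ext_iff, Matrix.cons_val_two, Matrix.vecHead, Matrix.vecTail]
  have hpt2 : ∀ t : ℝ, t • vtx ((2:Fin 3) + 1) + (1 - t) • vtx ((2:Fin 3) + 2)
      = (t, 1 - t) := by
    intro t
    simp only [show ((2:Fin 3)+1) = 0 from rfl, show ((2:Fin 3)+2) = 1 from rfl]
    norm_num [vtx, Prod.ext_iff]
  have hq0 : ∀ t : ℝ, t • vtx (0:Fin 3) + (1 - t) • ((1/3:ℝ), (1/3:ℝ))
      = (t + (1-t)/3, (1-t)/3) := by
    intro t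
    norm_num [vtx, Prod.ext_iff]
    first | (constructor <;> ring) | ring
  have hq1 : ∀ t : ℝ, t • vtx (1:Fin 3) + (1 - t) • ((1/3:ℝ), (1/3:ℝ))
      = ((1-t)/3, t + (1-t)/3) := by
    intro t
    norm_num [vtx, Prod.ext_iff]
    first | (constructor <;> ring) | ring
  have hq2 : ∀ t : ℝ, t • vtx (2:Fin 3) + (1 - t) • ((1/3:ℝ), (1/3:ℝ))
      = ((1-t)/3, (1-t)/3) := by
    intro t
    norm_num [vtx, Prod.ext_iff, Matrix.cons_val_two, Matrix.vecHead, Matrix.vecTail]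
    first | (constructor <;> ring) | ring
  -- the three edge (Crouzeix–Raviart) equations
  have he0 : a + c / 2 + f / 3 = 0 := by
    have h : (∫ t in (0:ℝ)..1, (a + c * t + f * t ^ 2)) = 0 := by
      conv_rhs => rw [← hCR 0]
      apply intervalIntegral.integral_congr
      intro t _
      simp only [hpt0, hev]
      norm_num
    rwa [integral_quadratic] at h
  have he1 : a + b / 2 + d / 3 = 0 := by
    have h : (∫ t in (0:ℝ)..1, ((a + b + d) + (-b - 2*d) * t + d * t ^ 2)) = 0 := by
      conv_rhs => rw [← hCR 1]
      apply intervalIntegral.integral_congr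
      intro t _
      simp only [hpt1, hev]
      norm_num
      ring
    rw [integral_quadratic] at h
    linarith
  have he2 : a + (b + c) / 2 + (d + f) / 3 + e / 6 = 0 := by
    have h : (∫ t in (0:ℝ)..1,
        ((a + c + f) + (b - c + e - 2*f) * t + (d - e + f) * t ^ 2)) = 0 := by
      conv_rhs => rw [← hCR 2]
      apply intervalIntegral.integral_congr
      intro t _
      simp only [hpt2, hev]
      norm_num
      ring
    rw [integral_quadratic] at h
    linarith
  -- the three weighted (barycenter segment) equations
  have hhalf : Jw β 1 = Jw β 0 / 2 := Jw_half hβ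
  have hg0 : (a + b/3 + c/3 + d/9 + e/9 + f/9) * Jw β 0
      + (2*b/3 - c/3 + 4*d/9 + e/9 - 2*f/9) * (Jw β 0 / 2)
      + (4*d/9 - 2*e/9 + f/9) * Jw β 2 = 0 := by
    have h : (∫ t in (0:ℝ)..1, t ^ β * (1 - t) ^ β *
        ((a + b/3 + c/3 + d/9 + e/9 + f/9) + (2*b/3 - c/3 + 4*d/9 + e/9 - 2*f/9) * t
          + (4*d/9 - 2*e/9 + f/9) * t ^ 2)) = 0 := by
      conv_rhs => rw [← hG 0]
      apply intervalIntegral.integral_congr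
      intro t _
      rw [hbary]
      simp only [hq0, hev, ]
      ring
    rw [integral_weighted hβ, hhalf] at h
    linarith
  have hg1 : (a + b/3 + c/3 + d/9 + e/9 + f/9) * Jw β 0
      + (2*c/3 - b/3 + 4*f/9 + e/9 - 2*d/9) * (Jw β 0 / 2)
      + (4*f/9 - 2*e/9 + d/9) * Jw β 2 = 0 := by
    have h : (∫ t in (0:ℝ)..1, t ^ β * (1 - t) ^ β *
        ((a + b/3 + c/3 + d/9 + e/9 + f/9) + (2*c/3 - b/3 + 4*f/9 + e/9 - 2*d/9) * t
          + (4*f/9 - 2*e/9 + d/9) * t ^ 2)) = 0 := by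
      conv_rhs => rw [← hG 1]
      apply intervalIntegral.integral_congr
      intro t _
      rw [hbary]
      simp only [hq1, hev, ]
      ring
    rw [integral_weighted hβ, hhalf] at h
    linarith
  have hg2 : (a + (b + c)/3 + (d + e + f)/9) * Jw β 0
      + (-(b + c)/3 - 2*(d + e + f)/9) * (Jw β 0 / 2)
      + ((d + e + f)/9) * Jw β 2 = 0 := by
    have h : (∫ t in (0:ℝ)..1, t ^ β * (1 - t) ^ β *
        ((a + (b + c)/3 + (d + e + f)/9) + (-(b + c)/3 - 2*(d + e + f)/9) * t
          + ((d + e + f)/9) * t ^ 2)) = 0 := by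
      conv_rhs => rw [← hG 2]
      apply intervalIntegral.integral_congr
      intro t _
      rw [hbary]
      simp only [hq2, hev, ]
      ring
    rw [integral_weighted hβ, hhalf] at h
    linarith
  -- linear algebra
  set L := Jw β 0 with hLdef
  set K := Jw β 2 with hKdef
  have hKpos : (0:ℝ) < K := Jw_pos hβ 2
  have hgap : K < Jw β 1 := Jw_gap hβ
  have hL2K : (0:ℝ) < L - 2 * K := by
    rw [hhalf] at hgap
    linarith
  have hne : K^2 * (L - 2*K) ≠ 0 :=
    ne_of_gt (mul_pos (pow_pos hKpos 2) hL2K)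
  have hza : K^2*(L-2*K)*a = 0 := by
    linear_combination ((-1/3)*L^2*K + (2/1)*L*K^2 + (-2/1)*K^3) * he0 + ((-1/3)*L^2*K + (2/1)*L*K^2 + (-2/1)*K^3) * he1 + ((2/3)*L^2*K + (-2/1)*L*K^2 + (2/1)*K^3) * he2 + ((-1/3)*L*K + (1/3)*K^2) * hg0 + ((-1/3)*L*K + (1/3)*K^2) * hg1 + ((2/3)*L*K + (-5/3)*K^2) * hg2
  have hzb : K^2*(L-2*K)*b = 0 := by
    linear_combination ((-4/1)*L*K^2 + (4/1)*K^3) * he0 + ((2/1)*L^2*K + (-6/1)*L*K^2) * he1 + ((-2/1)*L^2*K + (4/1)*L*K^2 + (-4/1)*K^3) * he2 + ((2/1)*K^2) * hg0 + ((2/1)*L*K + (-2/1)*K^2) * hg1 + ((-2/1)*L*K + (6/1)*K^2) * hg2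
  have hzc : K^2*(L-2*K)*c = 0 := by
    linear_combination ((2/1)*L^2*K + (-6/1)*L*K^2) * he0 + ((-4/1)*L*K^2 + (4/1)*K^3) * he1 + ((-2/1)*L^2*K + (4/1)*L*K^2 + (-4/1)*K^3) * he2 + ((2/1)*L*K + (-2/1)*K^2) * hg0 + ((2/1)*K^2) * hg1 + ((-2/1)*L*K + (6/1)*K^2) * hg2
  have hzd : K^2*(L-2*K)*d = 0 := by
    linear_combination ((1/1)*L^2*K) * he0 + ((-2/1)*L^2*K + (6/1)*L*K^2) * he1 + ((1/1)*L^2*K) * he2 + ((1/1)*L*K + (-4/1)*K^2) * hg0 + ((-2/1)*L*K + (2/1)*K^2) * hg1 + ((1/1)*L*K + (-4/1)*K^2) * hg2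
  have hze : K^2*(L-2*K)*e = 0 := by
    linear_combination ((-2/1)*L^2*K + (6/1)*L*K^2) * he0 + ((-2/1)*L^2*K + (6/1)*L*K^2) * he1 + ((4/1)*L^2*K + (-6/1)*L*K^2) * he2 + ((-2/1)*L*K + (2/1)*K^2) * hg0 + ((-2/1)*L*K + (2/1)*K^2) * hg1 + ((4/1)*L*K + (-10/1)*K^2) * hg2
  have hzf : K^2*(L-2*K)*f = 0 := by
    linear_combination ((-2/1)*L^2*K + (6/1)*L*K^2) * he0 + ((1/1)*L^2*K) * he1 + ((1/1)*L^2*K) * he2 + ((-2/1)*L*K + (2/1)*K^2) * hg0 + ((1/1)*L*K + (-4/1)*K^2) * hg1 + ((1/1)*L*K + (-4/1)*K^2) * hg2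
  have ha : a = 0 := by rcases mul_eq_zero.mp hza with h | h; exact absurd h hne; exact h
  have hb : b = 0 := by rcases mul_eq_zero.mp hzb with h | h; exact absurd h hne; exact h
  have hc : c = 0 := by rcases mul_eq_zero.mp hzc with h | h; exact absurd h hne; exact h
  have hd : d = 0 := by rcases mul_eq_zero.mp hzd with h | h; exact absurd h hne; exact h
  have hee : e = 0 := by rcases mul_eq_zero.mp hze with h | h; exact absurd h hne; exact h
  have hf : f = 0 := by rcases mul_eq_zero.mp hzf with h | h; exact absurd h hne; exact h
  rw [hdecomp, ha, hb, hc, hd, hee, hf]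
  simp

end
end

section
/- Let α > -1, α ≠ -6/7, and let p be a bivariate polynomial of degree at most 2 on the reference triangle T (vertices v₁=(1,0), v₂=(0,1), v₃=(0,0)) whose Crouzeix–Raviart edge averages vanish: ∫₀¹ p(t v_{j+1}+(1-t)v_{j+2}) dt = 0 for j=1,2,3. Then the vector (p(v₁), p(v₂), p(v₃)) satisfies the linear system γ_α · M · (p(v₁),p(v₂),p(v₃))ᵀ = (F₁(p), F₂(p), F₃(p))ᵀ, where M is the 3×3 matrix with diagonal entries K_α = -α/(2α+3) and off-diagonal entries h_α = -(5α+6)/(4(2α+3)), γ_α = B(α+2,α+1), and F_j(p) = ∫₀¹ t^α(1-t)^α p(t v_j + (1-t)m_j) dt with m_j the midpoint of the edge opposite v_j. -/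
open MvPolynomial

noncomputable section

/-- The Euler beta function. -/
def eulerBeta (z1 z2 : ℝ) : ℝ :=
  ∫ u in (0:ℝ)..1, u ^ (z1 - 1) * (1 - u) ^ (z2 - 1)

/-! ### Auxiliary lemmas -/

open MeasureTheory intervalIntegral in
lemma quad_rep (p : MvPolynomial (Fin 2) ℝ) (hp : p.totalDegree ≤ 2) :
    ∃ c : Fin 6 → ℝ, ∀ x y : ℝ, evalP p (x, y) =
      c 0 + c 1 * x + c 2 * y + c 3 * x^2 + c 4 * (x*y) + c 5 * y^2 := by
  classical
  set e10 : Fin 2 →₀ ℕ := Finsupp.single 0 1 with he10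
  set e01 : Fin 2 →₀ ℕ := Finsupp.single 1 1 with he01
  set e20 : Fin 2 →₀ ℕ := Finsupp.single 0 2 with he20
  set e11 : Fin 2 →₀ ℕ := Finsupp.single 0 1 + Finsupp.single 1 1 with he11
  set e02 : Fin 2 →₀ ℕ := Finsupp.single 1 2 with he02
  set S : Finset (Fin 2 →₀ ℕ) := {0, e10, e01, e20, e11, e02} with hS
  have key : ∀ d : Fin 2 →₀ ℕ, d = Finsupp.single 0 (d 0) + Finsupp.single 1 (d 1) := by
    intro d; ext i; fin_cases i <;> simp [Finsupp.single_apply]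
  have hsub : p.support ⊆ S := by
    intro d hd
    have h1 : (d.sum fun _ n => n) ≤ 2 := le_trans (MvPolynomial.le_totalDegree hd) hp
    have h2 : (d.sum fun _ n => n) = d 0 + d 1 := by
      rw [Finsupp.sum_fintype _ _ (fun _ => rfl)]
      simp [Fin.sum_univ_two]
    have hab : d 0 + d 1 ≤ 2 := by omega
    have hkey := key d
    have h0 : d 0 ≤ 2 := by omega
    have h1' : d 1 ≤ 2 := by omega
    rw [hS]
    interval_cases h : (d 0) <;> interval_cases h' : (d 1) <;>
      simp [he10, he01, he20, he11, he02, hkey] <;> omega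
  refine ⟨![p.coeff 0, p.coeff e10, p.coeff e01, p.coeff e20, p.coeff e11, p.coeff e02], ?_⟩
  intro x y
  rw [evalP, eval_eq', Finset.sum_subset hsub (by
    intro d _ hd; rw [MvPolynomial.notMem_support_iff.mp hd]; ring)]
  rw [hS]
  rw [Finset.sum_insert (by simp [he10, he01, he20, he11, he02, Finsupp.ext_iff, Fin.forall_fin_two, Finsupp.single_apply]),
      Finset.sum_insert (by simp [he10, he01, he20, he11, he02, Finsupp.ext_iff, Fin.forall_fin_two, Finsupp.single_apply]),
      Finset.sum_insert (by simp [he10, he01, he20, he11, he02, Finsupp.ext_iff, Fin.forall_fin_two, Finsupp.single_apply]),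
      Finset.sum_insert (by simp [he10, he01, he20, he11, he02, Finsupp.ext_iff, Fin.forall_fin_two, Finsupp.single_apply]),
      Finset.sum_insert (by simp [he10, he01, he20, he11, he02, Finsupp.ext_iff, Fin.forall_fin_two, Finsupp.single_apply]),
      Finset.sum_singleton]
  simp [he10, he01, he20, he11, he02, Fin.prod_univ_two, Finsupp.single_apply, Finsupp.add_apply, Matrix.cons_val_succ, Matrix.cons_val_zero, show (5:Fin 6) = Fin.succ (Fin.succ (Fin.succ (Fin.succ (Fin.succ 0)))) from rfl]
  ring

lemma eulerBeta_eq_complex (z1 z2 : ℝ) :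
    (eulerBeta z1 z2 : ℂ) = Complex.betaIntegral z1 z2 := by
  rw [eulerBeta, Complex.betaIntegral, ← intervalIntegral.integral_ofReal]
  refine intervalIntegral.integral_congr fun x hx => ?_
  rw [Set.uIcc_of_le zero_le_one] at hx
  push_cast
  rw [show ((z1:ℂ) - 1) = ((z1 - 1 : ℝ) : ℂ) by push_cast; ring,
      show ((z2:ℂ) - 1) = ((z2 - 1 : ℝ) : ℂ) by push_cast; ring,
      show ((1:ℂ) - (x:ℂ)) = ((1 - x : ℝ) : ℂ) by push_cast; ring,
      ← Complex.ofReal_cpow hx.1, ← Complex.ofReal_cpow (by linarith [hx.2] : (0:ℝ) ≤ 1 - x)]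

open MeasureTheory in
lemma eulerBeta_integrable (z1 z2 : ℝ) (h1 : 0 < z1) (h2 : 0 < z2) :
    IntervalIntegrable (fun t : ℝ => t ^ (z1 - 1) * (1 - t) ^ (z2 - 1)) volume 0 1 := by
  have h := Complex.betaIntegral_convergent (u := (z1:ℂ)) (v := (z2:ℂ)) (by simpa) (by simpa)
  rw [intervalIntegrable_iff] at h ⊢
  refine MeasureTheory.IntegrableOn.congr_fun h.re ?_ measurableSet_uIoc
  intro x hx
  rw [Set.uIoc_of_le zero_le_one] at hx
  have hx0 : (0:ℝ) ≤ x := le_of_lt hx.1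
  have hx1 : (0:ℝ) ≤ 1 - x := by linarith [hx.2]
  simp only
  rw [show ((x:ℂ)) ^ ((z1:ℂ) - 1) = ((x ^ (z1-1) : ℝ) : ℂ) by
        rw [show ((z1:ℂ) - 1) = ((z1 - 1 : ℝ) : ℂ) by push_cast; ring,
           ← Complex.ofReal_cpow hx0],
      show ((1:ℂ) - (x:ℂ)) ^ ((z2:ℂ) - 1) = (((1-x) ^ (z2-1) : ℝ) : ℂ) by
        rw [show ((z2:ℂ) - 1) = ((z2 - 1 : ℝ) : ℂ) by push_cast; ring,
           show ((1:ℂ) - (x:ℂ)) = ((1 - x : ℝ) : ℂ) by push_cast; ring,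
           ← Complex.ofReal_cpow hx1]]
  rw [← Complex.ofReal_mul]
  simp

lemma eulerBeta_step (z1 z2 : ℝ) (h1 : 0 < z1) (h2 : 0 < z2) :
    (z1 + z2) * eulerBeta (z1 + 1) z2 = z1 * eulerBeta z1 z2 := by
  have hu : 0 < (z1:ℂ).re := by simpa
  have hv : 0 < (z2:ℂ).re := by simpa
  have hu1 : 0 < ((z1:ℂ) + 1).re := by simp; linarith
  have g1 := Complex.Gamma_mul_Gamma_eq_betaIntegral hu hv
  have g2 := Complex.Gamma_mul_Gamma_eq_betaIntegral hu1 hv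
  have hz1 : (z1:ℂ) ≠ 0 := by
    simp only [ne_eq, Complex.ofReal_eq_zero]; exact ne_of_gt h1
  have hzv : (z1:ℂ) + (z2:ℂ) ≠ 0 := by
    intro h
    have := congrArg Complex.re h
    simp at this; linarith
  have hGne : Complex.Gamma ((z1:ℂ) + z2) ≠ 0 := by
    apply Complex.Gamma_ne_zero
    intro m h
    have := congrArg Complex.re h
    push_cast at this
    have : z1 + z2 = -(m:ℝ) := by simpa using this
    have hm : (0:ℝ) ≤ m := Nat.cast_nonneg m
    linarith
  rw [Complex.Gamma_add_one _ hz1] at g2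
  rw [show (z1:ℂ) + 1 + z2 = ((z1:ℂ) + z2) + 1 from by ring,
      Complex.Gamma_add_one _ hzv] at g2
  have key : ((((z1 + z2) * eulerBeta (z1 + 1) z2 : ℝ)) : ℂ) = ((z1 * eulerBeta z1 z2 : ℝ) : ℂ) := by
    push_cast
    rw [eulerBeta_eq_complex, eulerBeta_eq_complex]
    push_cast
    apply mul_left_cancel₀ hGne
    linear_combination (z1:ℂ) * g1 - g2
  exact_mod_cast key

open MeasureTheory in
lemma int_quad (a b c : ℝ) : (∫ t in (0:ℝ)..1, (a + b * t + c * t ^ 2)) = a + b / 2 + c / 3 := by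
  have A1 : IntervalIntegrable (fun t : ℝ => a + b * t) volume 0 1 :=
    ((continuous_const.add (continuous_const.mul continuous_id)).intervalIntegrable _ _)
  have A2 : IntervalIntegrable (fun t : ℝ => c * t ^ 2) volume 0 1 :=
    ((continuous_const.mul (continuous_pow 2)).intervalIntegrable _ _)
  have B1 : IntervalIntegrable (fun _ : ℝ => a) volume 0 1 := intervalIntegrable_const
  have B2 : IntervalIntegrable (fun t : ℝ => b * t) volume 0 1 :=
    ((continuous_const.mul continuous_id).intervalIntegrable _ _)
  rw [intervalIntegral.integral_add A1 A2, intervalIntegral.integral_add B1 B2,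
    intervalIntegral.integral_const, intervalIntegral.integral_const_mul,
    intervalIntegral.integral_const_mul, integral_id, integral_pow]
  norm_num
  ring

open MeasureTheory in
lemma median_integral (α : ℝ) (hα : -1 < α) (A B C : ℝ) (f : ℝ → ℝ)
    (hf : ∀ t ∈ Set.uIcc (0:ℝ) 1, f t = A + B * t + C * t ^ 2) :
    (∫ t in (0:ℝ)..1, t ^ α * (1 - t) ^ α * f t)
      = A * eulerBeta (α+1) (α+1) + B * eulerBeta (α+2) (α+1) + C * eulerBeta (α+3) (α+1) := by
  have h1 : (0:ℝ) < α + 1 := by linarith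
  have i1 := eulerBeta_integrable (α+1) (α+1) h1 h1
  have i2 := eulerBeta_integrable (α+2) (α+1) (by linarith) h1
  have i3 := eulerBeta_integrable (α+3) (α+1) (by linarith) h1
  rw [eulerBeta, eulerBeta, eulerBeta,
    ← intervalIntegral.integral_const_mul, ← intervalIntegral.integral_const_mul,
    ← intervalIntegral.integral_const_mul,
    ← intervalIntegral.integral_add (i1.const_mul A) (i2.const_mul B),
    ← intervalIntegral.integral_add ((i1.const_mul A).add (i2.const_mul B)) (i3.const_mul C)]
  apply intervalIntegral.integral_congr
  intro t ht
  rw [Set.uIcc_of_le zero_le_one] at ht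
  simp only
  rw [hf t (by rw [Set.uIcc_of_le zero_le_one]; exact ht)]
  rw [show α + 1 - 1 = α from by ring, show α + 2 - 1 = α + 1 from by ring,
      show α + 3 - 1 = α + 2 from by ring]
  rcases eq_or_lt_of_le ht.1 with h0 | h0
  · rw [← h0]
    rw [Real.zero_rpow (by linarith : α + 1 ≠ 0), Real.zero_rpow (by linarith : α + 2 ≠ 0)]
    ring
  · rw [Real.rpow_add h0 α 1, Real.rpow_add h0 α 2, Real.rpow_one,
      show (2:ℝ) = ((2:ℕ):ℝ) from by norm_num, Real.rpow_natCast]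
    ring

lemma final_alg (α γ B1 B3 a s : ℝ) (h23 : (2*α+3) ≠ 0)
    (hb1 : B1 = 2*γ) (hb3 : (2*α+3) * B3 = (α+2) * γ) :
    γ * (-α/(2*α+3) * a + -(5*α+6)/(4*(2*α+3)) * s) =
      (-(s/4)) * B1 + (-(2*a) - s/2) * γ + (3*a + 3*(s/4)) * B3 := by
  rw [hb1]
  field_simp
  rw [div_eq_iff (by contrapose! h23; linarith)]
  linear_combination (-6*(4*a+s)) * hb3

theorem first_family_linear_system (α : ℝ) (hα : -1 < α) (hα7 : α ≠ -6 / 7)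
    (p : MvPolynomial (Fin 2) ℝ) (hp : p.totalDegree ≤ 2)
    (hCR : ∀ j : Fin 3,
      (∫ t in (0:ℝ)..1, evalP p (t • vtx (j + 1) + (1 - t) • vtx (j + 2))) = 0) :
    ∀ j : Fin 3,
      eulerBeta (α + 2) (α + 1) *
        ((-α / (2 * α + 3)) * evalP p (vtx j) +
         (-(5 * α + 6) / (4 * (2 * α + 3))) *
           (evalP p (vtx (j + 1)) + evalP p (vtx (j + 2)))) =
      ∫ t in (0:ℝ)..1, t ^ α * (1 - t) ^ α * evalP p (t • vtx j + (1 - t) • mid j) := by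
  obtain ⟨c, hcrep⟩ := quad_rep p hp
  have h23 : (2*α+3) ≠ 0 := by intro h; nlinarith
  have h1 : (0:ℝ) < α + 1 := by linarith
  have s1 := eulerBeta_step (α+1) (α+1) h1 h1
  rw [show α+1+1 = α+2 from by ring] at s1
  have hb1 : eulerBeta (α+1) (α+1) = 2 * eulerBeta (α+2) (α+1) := by
    apply mul_left_cancel₀ (show α+1 ≠ 0 from by linarith)
    linear_combination -s1
  have s2 := eulerBeta_step (α+2) (α+1) (by linarith) h1
  rw [show α+2+1 = α+3 from by ring] at s2
  have hb3 : (2*α+3) * eulerBeta (α+3) (α+1) = (α+2) * eulerBeta (α+2) (α+1) := by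
    linear_combination s2
  have line : ∀ u v : ℝ × ℝ, ∀ t : ℝ, evalP p (t • u + (1 - t) • v) =
      (c 0 + c 1*v.1 + c 2*v.2 + c 3*v.1^2 + c 4*(v.1*v.2) + c 5*v.2^2)
      + (c 1*(u.1-v.1) + c 2*(u.2-v.2) + 2*c 3*v.1*(u.1-v.1)
         + c 4*(v.1*(u.2-v.2)+v.2*(u.1-v.1)) + 2*c 5*v.2*(u.2-v.2)) * t
      + (c 3*(u.1-v.1)^2 + c 4*((u.1-v.1)*(u.2-v.2)) + c 5*(u.2-v.2)^2) * t^2 := by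
    intro u v t
    rw [show t • u + (1 - t) • v = (t*u.1+(1-t)*v.1, t*u.2+(1-t)*v.2) from rfl, hcrep]
    ring
  have lineInt : ∀ u v : ℝ × ℝ, (∫ t in (0:ℝ)..1, evalP p (t • u + (1 - t) • v)) =
      (c 0 + c 1*v.1 + c 2*v.2 + c 3*v.1^2 + c 4*(v.1*v.2) + c 5*v.2^2)
      + (c 1*(u.1-v.1) + c 2*(u.2-v.2) + 2*c 3*v.1*(u.1-v.1)
         + c 4*(v.1*(u.2-v.2)+v.2*(u.1-v.1)) + 2*c 5*v.2*(u.2-v.2)) / 2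
      + (c 3*(u.1-v.1)^2 + c 4*((u.1-v.1)*(u.2-v.2)) + c 5*(u.2-v.2)^2) / 3 := by
    intro u v
    simp only [line]
    exact int_quad _ _ _
  have v0 : vtx 0 = ((1:ℝ),(0:ℝ)) := rfl
  have v1 : vtx 1 = ((0:ℝ),(1:ℝ)) := rfl
  have v2 : vtx 2 = ((0:ℝ),(0:ℝ)) := rfl
  have hm0 : mid 0 = ((0:ℝ), (1:ℝ)/2) := by
    rw [mid, show ((0:Fin 3)+1) = 1 from rfl, show ((0:Fin 3)+2) = 2 from rfl, v1, v2]
    norm_num [Prod.ext_iff]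
  have hm1 : mid 1 = ((1:ℝ)/2, (0:ℝ)) := by
    rw [mid, show ((1:Fin 3)+1) = 2 from rfl, show ((1:Fin 3)+2) = 0 from rfl, v2, v0]
    norm_num [Prod.ext_iff]
  have hm2 : mid 2 = ((1:ℝ)/2, (1:ℝ)/2) := by
    rw [mid, show ((2:Fin 3)+1) = 0 from rfl, show ((2:Fin 3)+2) = 1 from rfl, v0, v1]
    norm_num [Prod.ext_iff]
  have E0 := hCR 0
  have E1 := hCR 1
  have E2 := hCR 2
  rw [show ((0:Fin 3)+1) = 1 from rfl, show ((0:Fin 3)+2) = 2 from rfl, lineInt] at E0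
  rw [show ((1:Fin 3)+1) = 2 from rfl, show ((1:Fin 3)+2) = 0 from rfl, lineInt] at E1
  rw [show ((2:Fin 3)+1) = 0 from rfl, show ((2:Fin 3)+2) = 1 from rfl, lineInt] at E2
  norm_num [v0, v1, v2] at E0 E1 E2
  have hv0 : evalP p (vtx 0) = c 0 + c 1 + c 3 := by
    rw [v0, hcrep]; norm_num
  have hv1 : evalP p (vtx 1) = c 0 + c 2 + c 5 := by
    rw [v1, hcrep]; norm_num
  have hv2 : evalP p (vtx 2) = c 0 := by
    rw [v2, hcrep]; norm_num
  intro j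
  fin_cases j
  · show eulerBeta (α + 2) (α + 1) *
        ((-α / (2 * α + 3)) * evalP p (vtx 0) +
         (-(5 * α + 6) / (4 * (2 * α + 3))) *
           (evalP p (vtx 1) + evalP p (vtx 2))) =
      ∫ t in (0:ℝ)..1, t ^ α * (1 - t) ^ α * evalP p (t • vtx 0 + (1 - t) • mid 0)
    rw [hm0, median_integral α hα _ _ _ _ (fun t _ => line (vtx 0) ((0:ℝ), (1:ℝ)/2) t),
      hv0, hv1, hv2]
    norm_num [v0]
    linear_combination (final_alg α (eulerBeta (α+2) (α+1)) (eulerBeta (α+1) (α+1))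
        (eulerBeta (α+3) (α+1)) (c 0 + c 1 + c 3) ((c 0 + c 2 + c 5) + c 0) h23 hb1 hb3)
      - ((3/2) * eulerBeta (α+1) (α+1) - 3 * eulerBeta (α+2) (α+1)
          + (3/2) * eulerBeta (α+3) (α+1)) * E0
      - (3 * eulerBeta (α+2) (α+1) - 3 * eulerBeta (α+3) (α+1)) * E1
      - (3 * eulerBeta (α+2) (α+1) - 3 * eulerBeta (α+3) (α+1)) * E2
  · show eulerBeta (α + 2) (α + 1) *
        ((-α / (2 * α + 3)) * evalP p (vtx 1) +
         (-(5 * α + 6) / (4 * (2 * α + 3))) *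
           (evalP p (vtx 2) + evalP p (vtx 0))) =
      ∫ t in (0:ℝ)..1, t ^ α * (1 - t) ^ α * evalP p (t • vtx 1 + (1 - t) • mid 1)
    rw [hm1, median_integral α hα _ _ _ _ (fun t _ => line (vtx 1) ((1:ℝ)/2, (0:ℝ)) t),
      hv0, hv1, hv2]
    norm_num [v1]
    linear_combination (final_alg α (eulerBeta (α+2) (α+1)) (eulerBeta (α+1) (α+1))
        (eulerBeta (α+3) (α+1)) (c 0 + c 2 + c 5) (c 0 + (c 0 + c 1 + c 3)) h23 hb1 hb3)
      - ((3/2) * eulerBeta (α+1) (α+1) - 3 * eulerBeta (α+2) (α+1)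
          + (3/2) * eulerBeta (α+3) (α+1)) * E1
      - (3 * eulerBeta (α+2) (α+1) - 3 * eulerBeta (α+3) (α+1)) * E0
      - (3 * eulerBeta (α+2) (α+1) - 3 * eulerBeta (α+3) (α+1)) * E2
  · show eulerBeta (α + 2) (α + 1) *
        ((-α / (2 * α + 3)) * evalP p (vtx 2) +
         (-(5 * α + 6) / (4 * (2 * α + 3))) *
           (evalP p (vtx 0) + evalP p (vtx 1))) =
      ∫ t in (0:ℝ)..1, t ^ α * (1 - t) ^ α * evalP p (t • vtx 2 + (1 - t) • mid 2)
    rw [hm2, median_integral α hα _ _ _ _ (fun t _ => line (vtx 2) ((1:ℝ)/2, (1:ℝ)/2) t),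
      hv0, hv1, hv2]
    norm_num [v2]
    linear_combination (final_alg α (eulerBeta (α+2) (α+1)) (eulerBeta (α+1) (α+1))
        (eulerBeta (α+3) (α+1)) (c 0) ((c 0 + c 1 + c 3) + (c 0 + c 2 + c 5)) h23 hb1 hb3)
      - ((3/2) * eulerBeta (α+1) (α+1) - 3 * eulerBeta (α+2) (α+1)
          + (3/2) * eulerBeta (α+3) (α+1)) * E2
      - (3 * eulerBeta (α+2) (α+1) - 3 * eulerBeta (α+3) (α+1)) * E0
      - (3 * eulerBeta (α+2) (α+1) - 3 * eulerBeta (α+3) (α+1)) * E1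

end
end

section
/- Let β > -1, and let p be a bivariate polynomial of degree at most 2 on the reference triangle T (vertices v₁=(1,0), v₂=(0,1), v₃=(0,0)) whose Crouzeix–Raviart edge averages vanish. Then ν_β · N · (p(v₁),p(v₂),p(v₃))ᵀ = (G₁(p),G₂(p),G₃(p))ᵀ, where N is the 3×3 matrix with diagonal entries 2 and off-diagonal entries -(3β+4), ν_β = B(β+2,β+1)/(3(2β+3)), and G_j(p) = ∫₀¹ t^β(1-t)^β p(t v_j + (1-t)m*) dt with m* the barycenter of T. -/
open MvPolynomial

noncomputable section

open MeasureTheory intervalIntegral in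
lemma eb_complex (a b : ℝ) : (eulerBeta a b : ℂ) = Complex.betaIntegral a b := by
  rw [eulerBeta, Complex.betaIntegral, ← intervalIntegral.integral_ofReal]
  refine intervalIntegral.integral_congr fun x hx => ?_
  rw [Set.uIcc_of_le (by norm_num : (0:ℝ) ≤ 1)] at hx
  push_cast
  rw [Complex.ofReal_cpow hx.1, Complex.ofReal_cpow (by linarith [hx.2])]
  push_cast
  ring

open MeasureTheory in
lemma eb_integrable {a b : ℝ} (ha : 0 < a) (hb : 0 < b) :
    IntervalIntegrable (fun x : ℝ => x ^ (a - 1) * (1 - x) ^ (b - 1)) volume 0 1 := by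
  have h := Complex.betaIntegral_convergent (u := a) (v := b) (by simpa) (by simpa)
  rw [intervalIntegrable_iff_integrableOn_Ioc_of_le (by norm_num)] at h ⊢
  have heq : Set.EqOn (fun x : ℝ => ((x ^ (a-1) * (1-x)^(b-1) : ℝ) : ℂ))
      (fun x : ℝ => (x : ℂ) ^ ((a:ℂ) - 1) * (1 - (x : ℂ)) ^ ((b:ℂ) - 1)) (Set.Ioc 0 1) := by
    intro x hx
    push_cast
    rw [Complex.ofReal_cpow hx.1.le, Complex.ofReal_cpow (by linarith [hx.2])]
    push_cast; ring
  have h2 : IntegrableOn (fun x : ℝ => ((x ^ (a-1) * (1-x)^(b-1) : ℝ) : ℂ))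
      (Set.Ioc 0 1) volume := h.congr_fun heq.symm measurableSet_Ioc
  refine h2.re.congr ?_
  filter_upwards with x
  simp

lemma eb_symm (a b : ℝ) : eulerBeta a b = eulerBeta b a := by
  rw [eulerBeta, eulerBeta]
  have := intervalIntegral.integral_comp_sub_left
    (a := 0) (b := 1) (fun x : ℝ => x ^ (b - 1) * (1 - x) ^ (a - 1)) 1
  simp only [sub_zero, sub_self] at this
  rw [← this]
  refine intervalIntegral.integral_congr fun x hx => ?_
  simp only [sub_sub_cancel]
  ring

open MeasureTheory in
lemma eb_add {a b : ℝ} (ha : 0 < a) (hb : 0 < b) :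
    eulerBeta a b = eulerBeta (a + 1) b + eulerBeta a (b + 1) := by
  have key : eulerBeta a b = ∫ x in (0:ℝ)..1,
      (x ^ (a + 1 - 1) * (1 - x) ^ (b - 1) + x ^ (a - 1) * (1 - x) ^ (b + 1 - 1)) := by
    rw [eulerBeta]
    refine intervalIntegral.integral_congr_ae ?_
    have h1 : ∀ᵐ x : ℝ ∂volume, x ≠ 1 := by
      refine (MeasureTheory.ae_iff ..).mpr ?_
      simp [Real.volume_singleton]
    filter_upwards [h1] with x hx1 hx
    rw [Set.uIoc_of_le (by norm_num : (0:ℝ) ≤ 1)] at hx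
    have hx0 : x ≠ 0 := hx.1.ne'
    have hx1' : (1 : ℝ) - x ≠ 0 := by intro h; apply hx1; linarith
    rw [show a + 1 - 1 = (a - 1) + 1 by ring, show b + 1 - 1 = (b - 1) + 1 by ring,
      Real.rpow_add_one hx0, Real.rpow_add_one hx1']
    ring
  rw [key, intervalIntegral.integral_add
    (eb_integrable (by linarith) hb) (eb_integrable ha (by linarith))]
  rfl

lemma eb_rec {a b : ℝ} (ha : 0 < a) (hb : 0 < b) :
    a * eulerBeta a (b + 1) = b * eulerBeta (a + 1) b := by
  have h := Complex.betaIntegral_recurrence (u := a) (v := b) (by simpa) (by simpa)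
  have h2 : ((a * eulerBeta a (b+1) : ℝ) : ℂ) = ((b * eulerBeta (a+1) b : ℝ) : ℂ) := by
    push_cast
    rw [eb_complex, eb_complex]
    push_cast at h ⊢
    exact h
  exact_mod_cast h2

open MeasureTheory in
lemma int_quad_s18 (A B C : ℝ) {f : ℝ → ℝ} (h : ∀ t, f t = A + B * t + C * t ^ 2) :
    ∫ t in (0:ℝ)..1, f t = A + B / 2 + C / 3 := by
  have h1 : IntervalIntegrable (fun t : ℝ => B * t) volume 0 1 :=
    (intervalIntegral.intervalIntegrable_id).const_mul B
  have h2 : IntervalIntegrable (fun t : ℝ => C * t ^ 2) volume 0 1 :=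
    ((intervalIntegral.intervalIntegrable_pow 2)).const_mul C
  have : ∫ t in (0:ℝ)..1, f t = ∫ t in (0:ℝ)..1, (A + B * t + C * t ^ 2) :=
    intervalIntegral.integral_congr fun t _ => h t
  rw [this, intervalIntegral.integral_add (intervalIntegrable_const.add h1) h2,
    intervalIntegral.integral_add intervalIntegrable_const h1,
    intervalIntegral.integral_const_mul, intervalIntegral.integral_const_mul]
  simp [integral_id, integral_pow]
  ring

open MeasureTheory in
lemma rhs_split {β : ℝ} (hβ : -1 < β) (A B C : ℝ) {f : ℝ → ℝ}
    (h : ∀ t, f t = A + B * t + C * t ^ 2) :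
    ∫ t in (0:ℝ)..1, t ^ β * (1 - t) ^ β * f t =
      A * eulerBeta (β + 1) (β + 1) + B * eulerBeta (β + 2) (β + 1)
        + C * eulerBeta (β + 3) (β + 1) := by
  have hb1 : (0:ℝ) < β + 1 := by linarith
  have i0 : IntervalIntegrable (fun x : ℝ => x ^ (β + 1 - 1) * (1 - x) ^ (β + 1 - 1)) volume 0 1 :=
    eb_integrable hb1 hb1
  have i1 : IntervalIntegrable (fun x : ℝ => x ^ (β + 2 - 1) * (1 - x) ^ (β + 1 - 1)) volume 0 1 :=
    eb_integrable (by linarith) hb1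
  have i2 : IntervalIntegrable (fun x : ℝ => x ^ (β + 3 - 1) * (1 - x) ^ (β + 1 - 1)) volume 0 1 :=
    eb_integrable (by linarith) hb1
  have key : ∫ t in (0:ℝ)..1, t ^ β * (1 - t) ^ β * f t =
      ∫ t in (0:ℝ)..1, (A * (t ^ (β + 1 - 1) * (1 - t) ^ (β + 1 - 1))
        + B * (t ^ (β + 2 - 1) * (1 - t) ^ (β + 1 - 1))
        + C * (t ^ (β + 3 - 1) * (1 - t) ^ (β + 1 - 1))) := by
    refine intervalIntegral.integral_congr_ae ?_
    filter_upwards with t ht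
    rw [Set.uIoc_of_le (by norm_num : (0:ℝ) ≤ 1)] at ht
    have ht0 : t ≠ 0 := ht.1.ne'
    have e0 : t ^ (β + 1 - 1) = t ^ β := by norm_num
    have e1 : t ^ (β + 2 - 1) = t ^ β * t := by
      rw [show β + 2 - 1 = β + 1 by ring, Real.rpow_add_one ht0]
    have e2 : t ^ (β + 3 - 1) = t ^ β * t * t := by
      rw [show β + 3 - 1 = β + 1 + 1 by ring, Real.rpow_add_one ht0, Real.rpow_add_one ht0]
    rw [h t, e0, e1, e2]
    ring
  rw [key, intervalIntegral.integral_add ((i0.const_mul A).add (i1.const_mul B)) (i2.const_mul C),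
    intervalIntegral.integral_add (i0.const_mul A) (i1.const_mul B),
    intervalIntegral.integral_const_mul, intervalIntegral.integral_const_mul,
    intervalIntegral.integral_const_mul]
  rfl

lemma ebR1 {β : ℝ} (hβ : -1 < β) :
    eulerBeta (β + 1) (β + 1) = 2 * eulerBeta (β + 2) (β + 1) := by
  have h := eb_add (a := β + 1) (b := β + 1) (by linarith) (by linarith)
  rw [show β + 1 + 1 = β + 2 by ring] at h
  rw [h, eb_symm (β + 1) (β + 2)]
  ring

lemma ebR2 {β : ℝ} (hβ : -1 < β) :
    (2 * β + 3) * eulerBeta (β + 3) (β + 1) = (β + 2) * eulerBeta (β + 2) (β + 1) := by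
  have hadd := eb_add (a := β + 2) (b := β + 1) (by linarith) (by linarith)
  rw [show β + 2 + 1 = β + 3 by ring, show β + 1 + 1 = β + 2 by ring] at hadd
  have hrec := eb_rec (a := β + 2) (b := β + 1) (by linarith) (by linarith)
  rw [show β + 1 + 1 = β + 2 by ring, show β + 2 + 1 = β + 3 by ring] at hrec
  linear_combination (-(β + 2)) * hadd - hrec

abbrev mon (i j : ℕ) : Fin 2 →₀ ℕ := Finsupp.single 0 i + Finsupp.single 1 j

lemma mon_apply0 (i j : ℕ) : mon i j 0 = i := by simp [mon, Finsupp.single_apply]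
lemma mon_apply1 (i j : ℕ) : mon i j 1 = j := by simp [mon, Finsupp.single_apply]

lemma repr2 (p : MvPolynomial (Fin 2) ℝ) (hp : p.totalDegree ≤ 2) :
    ∃ a : Fin 6 → ℝ, ∀ x y : ℝ, MvPolynomial.eval ![x, y] p =
      a 0 + a 1 * x + a 2 * y + a 3 * x ^ 2 + a 4 * (x * y) + a 5 * y ^ 2 := by
  classical
  set S : Finset (Fin 2 →₀ ℕ) :=
    {mon 0 0, mon 1 0, mon 0 1, mon 2 0, mon 1 1, mon 0 2} with hS
  have key : ∀ i j : ℕ, i + j ≤ 2 → mon i j ∈ S := by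
    intro i j hij
    have hi : i ≤ 2 := by omega
    have hj : j ≤ 2 := by omega
    interval_cases i <;> interval_cases j <;> (try (exfalso; omega)) <;> simp [hS]
  have hsub : p.support ⊆ S := by
    intro d hd
    have hdeg : d 0 + d 1 ≤ 2 := by
      have h1 := MvPolynomial.le_totalDegree hd
      have h2 : (d.sum fun _ e => e) = d 0 + d 1 := by
        rw [Finsupp.sum_fintype _ _ (fun _ => rfl), Fin.sum_univ_two]
      omega
    have hdm : d = mon (d 0) (d 1) := by
      ext i
      fin_cases i
      · simp [mon_apply0]
      · simp [mon_apply1]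
    exact hdm ▸ key _ _ hdeg
  refine ⟨![coeff (mon 0 0) p, coeff (mon 1 0) p, coeff (mon 0 1) p,
    coeff (mon 2 0) p, coeff (mon 1 1) p, coeff (mon 0 2) p], fun x y => ?_⟩
  rw [MvPolynomial.eval_eq]
  rw [Finset.sum_subset hsub (fun d _ hd => by
    rw [MvPolynomial.notMem_support_iff.mp hd, zero_mul])]
  have hprod : ∀ i j : ℕ, (∏ k ∈ (mon i j).support, (![x, y] k) ^ (mon i j k)) = x ^ i * y ^ j := by
    intro i j
    rw [Finset.prod_subset (Finset.subset_univ _)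
      (fun k _ hk => by rw [Finsupp.notMem_support_iff.mp hk, pow_zero]),
      Fin.prod_univ_two, mon_apply0, mon_apply1]
    simp
  have hne : ∀ i j i' j' : ℕ, (i ≠ i' ∨ j ≠ j') → mon i j ≠ mon i' j' := by
    intro i j i' j' h he
    rcases h with h | h
    · exact h (by rw [← mon_apply0 i j, ← mon_apply0 i' j', he])
    · exact h (by rw [← mon_apply1 i j, ← mon_apply1 i' j', he])
  rw [hS]
  rw [Finset.sum_insert (by
      simp only [Finset.mem_insert, Finset.mem_singleton]
      push_neg
      exact ⟨hne _ _ _ _ (by omega), hne _ _ _ _ (by omega), hne _ _ _ _ (by omega),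
        hne _ _ _ _ (by omega), hne _ _ _ _ (by omega)⟩),
    Finset.sum_insert (by
      simp only [Finset.mem_insert, Finset.mem_singleton]
      push_neg
      exact ⟨hne _ _ _ _ (by omega), hne _ _ _ _ (by omega),
        hne _ _ _ _ (by omega), hne _ _ _ _ (by omega)⟩),
    Finset.sum_insert (by
      simp only [Finset.mem_insert, Finset.mem_singleton]
      push_neg
      exact ⟨hne _ _ _ _ (by omega), hne _ _ _ _ (by omega), hne _ _ _ _ (by omega)⟩),
    Finset.sum_insert (by
      simp only [Finset.mem_insert, Finset.mem_singleton]
      push_neg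
      exact ⟨hne _ _ _ _ (by omega), hne _ _ _ _ (by omega)⟩),
    Finset.sum_insert (by
      simp only [Finset.mem_singleton]
      exact hne _ _ _ _ (by omega)),
    Finset.sum_singleton]
  simp only [hprod]
  have h5 : (![coeff (mon 0 0) p, coeff (mon 1 0) p, coeff (mon 0 1) p, coeff (mon 2 0) p,
      coeff (mon 1 1) p, coeff (mon 0 2) p] : Fin 6 → ℝ) 5 = coeff (mon 0 2) p := rfl
  norm_num [h5, Matrix.cons_val_two, Matrix.cons_val_three, Matrix.cons_val_four, Matrix.vecHead, Matrix.vecTail]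
  ring

set_option maxHeartbeats 2000000 in
theorem second_family_linear_system (β : ℝ) (hβ : -1 < β)
    (p : MvPolynomial (Fin 2) ℝ) (hp : p.totalDegree ≤ 2)
    (hCR : ∀ j : Fin 3,
      (∫ t in (0:ℝ)..1, evalP p (t • vtx (j + 1) + (1 - t) • vtx (j + 2))) = 0) :
    ∀ j : Fin 3,
      (eulerBeta (β + 2) (β + 1) / (3 * (2 * β + 3))) *
        (2 * evalP p (vtx j) +
         (-(3 * β + 4)) * (evalP p (vtx (j + 1)) + evalP p (vtx (j + 2)))) =
      ∫ t in (0:ℝ)..1, t ^ β * (1 - t) ^ β * evalP p (t • vtx j + (1 - t) • bary) := by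
  obtain ⟨a, ha⟩ := repr2 p hp
  have haP : ∀ q : ℝ × ℝ, evalP p q = a 0 + a 1 * q.1 + a 2 * q.2 + a 3 * q.1 ^ 2 +
      a 4 * (q.1 * q.2) + a 5 * q.2 ^ 2 := fun q => ha q.1 q.2
  have h23 : (2 * β + 3) ≠ 0 := by linarith
  -- vertex values
  have hv0 : evalP p (vtx 0) = a 0 + a 1 + a 3 := by
    rw [haP]; norm_num [vtx]
  have hv1 : evalP p (vtx 1) = a 0 + a 2 + a 5 := by
    rw [haP]; norm_num [vtx]
  have hv2 : evalP p (vtx 2) = a 0 := by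
    rw [haP]; norm_num [vtx, Matrix.cons_val_two, Matrix.vecHead, Matrix.vecTail]
  -- Crouzeix–Raviart equations
  have e0 : a 0 + a 2 / 2 + a 5 / 3 = 0 := by
    have h := hCR 0
    rwa [int_quad_s18 (a 0) (a 2) (a 5) (fun t => by
      show evalP p (t • vtx 1 + (1 - t) • vtx 2) = _
      rw [haP]; norm_num [vtx, Matrix.cons_val_two, Matrix.vecHead, Matrix.vecTail]; try ring)] at h
  have e1 : a 0 + a 1 / 2 + a 3 / 3 = 0 := by
    have h := hCR 1
    have := int_quad_s18 (a 0 + a 1 + a 3) (-(a 1) - 2 * a 3) (a 3)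
      (f := fun t => evalP p (t • vtx (1 + 1) + (1 - t) • vtx (1 + 2))) (fun t => by
        show evalP p (t • vtx 2 + (1 - t) • vtx 0) = _
        rw [haP]; norm_num [vtx, Matrix.cons_val_two, Matrix.vecHead, Matrix.vecTail]; try ring)
    rw [this] at h
    linarith
  have e2 : a 0 + (a 1 + a 2) / 2 + (a 3 + a 5) / 3 + a 4 / 6 = 0 := by
    have h := hCR 2
    have := int_quad_s18 (a 0 + a 2 + a 5) (a 1 - a 2 + a 4 - 2 * a 5) (a 3 - a 4 + a 5)
      (f := fun t => evalP p (t • vtx (2 + 1) + (1 - t) • vtx (2 + 2))) (fun t => by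
        show evalP p (t • vtx 0 + (1 - t) • vtx 1) = _
        rw [haP]; norm_num [vtx, Matrix.cons_val_two, Matrix.vecHead, Matrix.vecTail]; try ring)
    rw [this] at h
    linarith
  have ha0 : a 0 = a 4 / 6 := by linarith
  have ha1 : a 1 = -(a 4) / 3 - 2 * a 3 / 3 := by linarith
  have ha2 : a 2 = -(a 4) / 3 - 2 * a 5 / 3 := by linarith
  have hR1 := ebR1 hβ
  have hR2 := ebR2 hβ
  have hI2 : eulerBeta (β + 3) (β + 1) = (β + 2) * eulerBeta (β + 2) (β + 1) / (2 * β + 3) := by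
    rw [eq_div_iff h23]
    linear_combination hR2
  intro j
  fin_cases j
  · show eulerBeta (β + 2) (β + 1) / (3 * (2 * β + 3)) *
        (2 * evalP p (vtx 0) + -(3 * β + 4) * (evalP p (vtx 1) + evalP p (vtx 2))) =
      ∫ t in (0:ℝ)..1, t ^ β * (1 - t) ^ β * evalP p (t • vtx 0 + (1 - t) • bary)
    rw [hv0, hv1, hv2]
    rw [rhs_split hβ (a 0 + (a 1 + a 2) / 3 + (a 3 + a 4 + a 5) / 9)
      ((2 * a 1 - a 2) / 3 + (4 * a 3 + a 4 - 2 * a 5) / 9)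
      ((4 * a 3 - 2 * a 4 + a 5) / 9) (fun t => by
        show evalP p (t • vtx 0 + (1 - t) • bary) = _
        rw [haP]; norm_num [vtx, bary, Matrix.cons_val_two, Matrix.vecHead, Matrix.vecTail]; try ring)]
    rw [hR1, hI2, ha0, ha1, ha2]
    generalize eulerBeta (β + 2) (β + 1) = E
    field_simp
    ring
  · show eulerBeta (β + 2) (β + 1) / (3 * (2 * β + 3)) *
        (2 * evalP p (vtx 1) + -(3 * β + 4) * (evalP p (vtx 2) + evalP p (vtx 0))) =
      ∫ t in (0:ℝ)..1, t ^ β * (1 - t) ^ β * evalP p (t • vtx 1 + (1 - t) • bary)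
    rw [hv0, hv1, hv2]
    rw [rhs_split hβ (a 0 + (a 1 + a 2) / 3 + (a 3 + a 4 + a 5) / 9)
      ((2 * a 2 - a 1) / 3 + (4 * a 5 + a 4 - 2 * a 3) / 9)
      ((4 * a 5 - 2 * a 4 + a 3) / 9) (fun t => by
        show evalP p (t • vtx 1 + (1 - t) • bary) = _
        rw [haP]; norm_num [vtx, bary, Matrix.cons_val_two, Matrix.vecHead, Matrix.vecTail]; try ring)]
    rw [hR1, hI2, ha0, ha1, ha2]
    generalize eulerBeta (β + 2) (β + 1) = E
    field_simp
    ring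
  · show eulerBeta (β + 2) (β + 1) / (3 * (2 * β + 3)) *
        (2 * evalP p (vtx 2) + -(3 * β + 4) * (evalP p (vtx 0) + evalP p (vtx 1))) =
      ∫ t in (0:ℝ)..1, t ^ β * (1 - t) ^ β * evalP p (t • vtx 2 + (1 - t) • bary)
    rw [hv0, hv1, hv2]
    rw [rhs_split hβ (a 0 + (a 1 + a 2) / 3 + (a 3 + a 4 + a 5) / 9)
      (-(a 1 + a 2) / 3 - 2 * (a 3 + a 4 + a 5) / 9)
      ((a 3 + a 4 + a 5) / 9) (fun t => by
        show evalP p (t • vtx 2 + (1 - t) • bary) = _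
        rw [haP]; norm_num [vtx, bary, Matrix.cons_val_two, Matrix.vecHead, Matrix.vecTail]; try ring)]
    rw [hR1, hI2, ha0, ha1, ha2]
    generalize eulerBeta (β + 2) (β + 1) = E
    field_simp
    ring

end
end
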